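/- Let P1 and P2 be probability measures on a common measurable space and let ε ≥ 0. If P1 and P2 are (ε,0)-close, i.e. P1(A) ≤ e^ε·P2(A) and P2(A) ≤ e^ε·P1(A) for every measurable set A, then the Kullback–Leibler divergences satisfy D(P1‖P2) ≤ min{ε, ε²} and D(P2‖P1) ≤ min{ε, ε²} (measured in nats). -/

import Mathlib

open MeasureTheory Real
open scoped ENNReal Classical

/-- The Kullback–Leibler divergence `D(P‖Q)` (in nats), as an extended nonnegative real:
it is `∫ log (dP/dQ) dP` when `P ≪ Q` and the log-likelihood ratio is integrable,
and `∞` otherwise. -/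
noncomputable def klDiv {Ω : Type*} [MeasurableSpace Ω] (P Q : Measure Ω) : ℝ≥0∞ :=
  if P ≪ Q ∧ Integrable (llr P Q) P then ENNReal.ofReal (∫ x, llr P Q x ∂P) else ⊤

lemma aux_tanh {t : ℝ} (ht : 0 ≤ t) : 2 * (exp t - 1) ≤ t * (exp t + 1) := by
  set g : ℝ → ℝ := fun s => s * (exp s + 1) - 2 * (exp s - 1) with hg_def
  have hg : ∀ x : ℝ, HasDerivAt g (1 * (exp x + 1) + x * exp x - 2 * exp x) x := by
    intro x
    exact (((hasDerivAt_id x).mul ((Real.hasDerivAt_exp x).add_const 1)).sub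
      (((Real.hasDerivAt_exp x).sub_const 1).const_mul 2))
  have hmono : Monotone g := by
    refine monotone_of_deriv_nonneg (fun x => (hg x).differentiableAt) (fun x => ?_)
    rw [(hg x).deriv]
    have h1 : 1 + (-x) ≤ exp (-x) := by linarith [Real.add_one_le_exp (-x)]
    have h2 : exp x * (1 - x) ≤ 1 := by
      have := mul_le_mul_of_nonneg_left h1 (Real.exp_pos x).le
      rw [← Real.exp_add, add_neg_cancel, Real.exp_zero] at this
      nlinarith
    nlinarith [Real.exp_pos x]
  have h0 : g 0 = 0 := by simp [hg_def]
  have := hmono ht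
  rw [h0] at this
  simp only [hg_def] at this
  linarith

lemma aux_rnDeriv_le {Ω : Type*} [MeasurableSpace Ω] (P Q : Measure Ω)
    [IsFiniteMeasure P] [SigmaFinite Q] {c : ℝ}
    (h : ∀ A : Set Ω, MeasurableSet A → P A ≤ ENNReal.ofReal c * Q A) :
    P.rnDeriv Q ≤ᵐ[Q] fun _ => ENNReal.ofReal c := by
  refine ae_le_of_forall_setLIntegral_le_of_sigmaFinite (P.measurable_rnDeriv Q)
    (fun s hs _ => ?_)
  calc ∫⁻ x in s, P.rnDeriv Q x ∂Q ≤ P s := Measure.setLIntegral_rnDeriv_le s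
    _ ≤ ENNReal.ofReal c * Q s := h s hs
    _ = ∫⁻ _ in s, ENNReal.ofReal c ∂Q := by rw [setLIntegral_const]

lemma aux_ac {Ω : Type*} [MeasurableSpace Ω] (P Q : Measure Ω) {c : ℝ}
    (h : ∀ A : Set Ω, MeasurableSet A → P A ≤ ENNReal.ofReal c * Q A) : P ≪ Q := by
  refine Measure.AbsolutelyContinuous.mk (fun s hs h0 => ?_)
  have := h s hs
  rw [h0, mul_zero] at this
  exact le_antisymm this zero_le

lemma aux_kl_one_side {Ω : Type*} [MeasurableSpace Ω]
    (P Q : Measure Ω) [IsProbabilityMeasure P] [IsProbabilityMeasure Q]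
    (ε : ℝ) (hε : 0 ≤ ε)
    (hPQ : ∀ A : Set Ω, MeasurableSet A → P A ≤ ENNReal.ofReal (exp ε) * Q A)
    (hQP : ∀ A : Set Ω, MeasurableSet A → Q A ≤ ENNReal.ofReal (exp ε) * P A) :
    klDiv P Q ≤ ENNReal.ofReal (min ε (ε ^ 2)) := by
  have hacPQ : P ≪ Q := aux_ac P Q hPQ
  have hacQP : Q ≪ P := aux_ac Q P hQP
  set r : Ω → ℝ := fun x => (P.rnDeriv Q x).toReal with hr_def
  have hr_meas : Measurable r := (P.measurable_rnDeriv Q).ennreal_toReal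
  -- bounds on r, a.e. Q
  have hub : P.rnDeriv Q ≤ᵐ[Q] fun _ => ENNReal.ofReal (exp ε) := aux_rnDeriv_le P Q hPQ
  have hlb : ∀ᵐ x ∂Q, ENNReal.ofReal (exp (-ε)) ≤ P.rnDeriv Q x := by
    have h1 : Q.rnDeriv P ≤ᵐ[P] fun _ => ENNReal.ofReal (exp ε) := aux_rnDeriv_le Q P hQP
    have h2 : (Q.rnDeriv P)⁻¹ =ᵐ[Q] P.rnDeriv Q := Measure.inv_rnDeriv hacQP
    filter_upwards [hacQP.ae_le h1, h2] with x hx1 hx2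
    rw [← hx2, Pi.inv_apply]
    rw [Real.exp_neg, ENNReal.ofReal_inv_of_pos (Real.exp_pos ε)]
    exact ENNReal.inv_le_inv' hx1
  have hr_bounds : ∀ᵐ x ∂Q, exp (-ε) ≤ r x ∧ r x ≤ exp ε := by
    filter_upwards [hub, hlb, P.rnDeriv_lt_top Q] with x hx1 hx2 hx3
    constructor
    · have := ENNReal.toReal_mono hx3.ne hx2
      rwa [ENNReal.toReal_ofReal (Real.exp_pos _).le] at this
    · have := ENNReal.toReal_mono ENNReal.ofReal_ne_top hx1
      rwa [ENNReal.toReal_ofReal (Real.exp_pos _).le] at this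
  have hllrQ : ∀ᵐ x ∂Q, |llr P Q x| ≤ ε ∧ 0 < r x := by
    filter_upwards [hr_bounds] with x ⟨hx1, hx2⟩
    have hpos : 0 < r x := lt_of_lt_of_le (Real.exp_pos _) hx1
    refine ⟨abs_le.2 ⟨?_, ?_⟩, hpos⟩
    · calc -ε = log (exp (-ε)) := (Real.log_exp _).symm
        _ ≤ log (r x) := Real.log_le_log (Real.exp_pos _) hx1
    · calc log (r x) ≤ log (exp ε) := Real.log_le_log hpos hx2
        _ = ε := Real.log_exp _
  have hllrP : ∀ᵐ x ∂P, |llr P Q x| ≤ ε := hacPQ.ae_le (hllrQ.mono fun x hx => hx.1)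
  have hint : Integrable (llr P Q) P :=
    Integrable.mono' (integrable_const ε) (measurable_llr P Q).aestronglyMeasurable hllrP
  have hintQ : Integrable (llr P Q) Q :=
    Integrable.mono' (integrable_const ε) (measurable_llr P Q).aestronglyMeasurable
      (hllrQ.mono fun x hx => hx.1)
  have hrint : Integrable r Q := Measure.integrable_toReal_rnDeriv
  -- bound 1 : ∫ llr ∂P ≤ ε
  have bound1 : ∫ x, llr P Q x ∂P ≤ ε := by
    calc ∫ x, llr P Q x ∂P ≤ ∫ _, ε ∂P :=
          integral_mono_ae hint (integrable_const ε)
            (hllrP.mono fun x hx => (abs_le.1 hx).2)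
      _ = ε := by simp
  -- ∫ llr ∂Q ≤ 0
  have hJ : ∫ x, llr P Q x ∂Q ≤ 0 := by
    have : ∫ x, llr P Q x ∂Q ≤ ∫ x, (r x - 1) ∂Q := by
      refine integral_mono_ae hintQ (hrint.sub (integrable_const 1)) ?_
      filter_upwards [hllrQ] with x ⟨_, hpos⟩
      exact Real.log_le_sub_one_of_pos hpos
    have h2 : ∫ x, (r x - 1) ∂Q = 0 := by
      rw [integral_sub hrint (integrable_const 1), Measure.integral_toReal_rnDeriv hacPQ]
      simp
    linarith
  -- ∫ llr ∂P = ∫ r * llr ∂Q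
  have hIr : ∫ x, llr P Q x ∂P = ∫ x, r x * llr P Q x ∂Q := by
    rw [← MeasureTheory.integral_rnDeriv_smul hacPQ]
    simp [hr_def, smul_eq_mul]
  have hmulint : Integrable (fun x => r x * llr P Q x) Q := by
    have := (MeasureTheory.integrable_rnDeriv_smul_iff hacPQ (f := llr P Q)).mpr hint
    simpa [hr_def, smul_eq_mul] using this
  -- the set A
  set A : Set Ω := {x | 1 ≤ r x} with hA_def
  have hA : MeasurableSet A := measurableSet_le measurable_const hr_meas
  set a : ℝ := (P A).toReal with ha_def
  set b : ℝ := (Q A).toReal with hb_def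
  have habs_int : Integrable (fun x => |r x - 1|) Q := (hrint.sub (integrable_const 1)).abs
  -- ∫ |r - 1| ∂Q = 2 * (a - b)
  have hT : ∫ x, |r x - 1| ∂Q = 2 * (a - b) := by
    have h1 : ∫ x in A, |r x - 1| ∂Q = a - b := by
      rw [setIntegral_congr_fun hA (g := fun x => r x - 1)
        (fun x hx => abs_of_nonneg (by simp only [hA_def, Set.mem_setOf_eq] at hx; linarith))]
      rw [integral_sub hrint.integrableOn (integrableOn_const (measure_ne_top Q A) (by simp)),
        Measure.setIntegral_toReal_rnDeriv hacPQ A]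
      simp [ha_def, hb_def]
      rfl
    have h2 : ∫ x in Aᶜ, |r x - 1| ∂Q = (Q Aᶜ).toReal - (P Aᶜ).toReal := by
      rw [setIntegral_congr_fun hA.compl (g := fun x => 1 - r x)
        (fun x hx => by
          simp only [hA_def, Set.mem_compl_iff, Set.mem_setOf_eq, not_le] at hx
          rw [abs_of_nonpos (by linarith)]; ring)]
      rw [integral_sub (integrableOn_const (measure_ne_top Q Aᶜ) (by simp) : IntegrableOn (fun _ => (1:ℝ)) Aᶜ Q) hrint.integrableOn,
        Measure.setIntegral_toReal_rnDeriv hacPQ Aᶜ]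
      simp
      rfl
    have hPc : (P Aᶜ).toReal = 1 - a := by
      rw [prob_compl_eq_one_sub hA,
        ENNReal.toReal_sub_of_le prob_le_one ENNReal.one_ne_top, ENNReal.toReal_one]
    have hQc : (Q Aᶜ).toReal = 1 - b := by
      rw [prob_compl_eq_one_sub hA,
        ENNReal.toReal_sub_of_le prob_le_one ENNReal.one_ne_top, ENNReal.toReal_one]
    rw [← integral_add_compl hA habs_int, h1, h2, hPc, hQc]
    ring
  -- pointwise bound
  have hptw : ∀ᵐ x ∂Q, r x * llr P Q x - llr P Q x ≤ ε * |r x - 1| := by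
    filter_upwards [hllrQ] with x hx
    obtain ⟨habs, hpos⟩ := hx
    obtain ⟨hL1, hL2⟩ := abs_le.1 habs
    rcases le_total 1 (r x) with h | h
    · rw [abs_of_nonneg (by linarith)]
      nlinarith
    · rw [abs_of_nonpos (by linarith)]
      nlinarith
  -- bound 2
  have bound2 : ∫ x, llr P Q x ∂P ≤ ε ^ 2 := by
    have hsub_int : Integrable (fun x => r x * llr P Q x - llr P Q x) Q := hmulint.sub hintQ
    have h5 : ∫ x, llr P Q x ∂P ≤ ∫ x, (r x * llr P Q x - llr P Q x) ∂Q := by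
      rw [hIr, integral_sub hmulint hintQ]
      linarith
    have h6 : ∫ x, (r x * llr P Q x - llr P Q x) ∂Q ≤ ∫ x, ε * |r x - 1| ∂Q :=
      integral_mono_ae hsub_int (habs_int.const_mul ε) hptw
    have h7 : ∫ x, ε * |r x - 1| ∂Q = ε * (2 * (a - b)) := by
      rw [integral_const_mul, hT]
    have hE := Real.exp_pos ε
    have hab1 : a ≤ exp ε * b := by
      have h' := ENNReal.toReal_mono (by finiteness) (hPQ A hA)
      rwa [ENNReal.toReal_mul, ENNReal.toReal_ofReal hE.le] at h'
    have hab2 : 1 - b ≤ exp ε * (1 - a) := by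
      have h' := ENNReal.toReal_mono (by finiteness) (hQP Aᶜ hA.compl)
      rw [ENNReal.toReal_mul, ENNReal.toReal_ofReal hE.le] at h'
      rw [prob_compl_eq_one_sub hA, prob_compl_eq_one_sub hA,
        ENNReal.toReal_sub_of_le prob_le_one ENNReal.one_ne_top,
        ENNReal.toReal_sub_of_le prob_le_one ENNReal.one_ne_top, ENNReal.toReal_one] at h'
      exact h'
    have hkey := aux_tanh hε
    have h8 : 2 * (a - b) ≤ ε := by nlinarith
    calc ∫ x, llr P Q x ∂P ≤ ε * (2 * (a - b)) := by linarith
      _ ≤ ε * ε := mul_le_mul_of_nonneg_left h8 hε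
      _ = ε ^ 2 := (sq ε).symm
  have hkl : klDiv P Q = ENNReal.ofReal (∫ x, llr P Q x ∂P) := by
    simp only [klDiv]
    exact if_pos ⟨hacPQ, hint⟩
  rw [hkl]
  exact ENNReal.ofReal_le_ofReal (le_min bound1 bound2)


/-- If probability measures `P1` and `P2` are `(ε,0)`-close, then
`D(P1‖P2) ≤ min {ε, ε²}` and `D(P2‖P1) ≤ min {ε, ε²}` (in nats). -/
theorem kl_le_of_eps_zero_close {Ω : Type*} [MeasurableSpace Ω]
    (P1 P2 : Measure Ω) [IsProbabilityMeasure P1] [IsProbabilityMeasure P2]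
    (ε : ℝ) (hε : 0 ≤ ε)
    (h12 : ∀ A : Set Ω, MeasurableSet A → P1 A ≤ ENNReal.ofReal (exp ε) * P2 A)
    (h21 : ∀ A : Set Ω, MeasurableSet A → P2 A ≤ ENNReal.ofReal (exp ε) * P1 A) :
    klDiv P1 P2 ≤ ENNReal.ofReal (min ε (ε ^ 2)) ∧
      klDiv P2 P1 ≤ ENNReal.ofReal (min ε (ε ^ 2)) :=
  ⟨aux_kl_one_side P1 P2 ε hε h12 h21, aux_kl_one_side P2 P1 ε hε h21 h12⟩
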